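/- arXiv:0910.2886 — 2 statements merged into one kernel-verified Lean document; each statement's English description precedes it below -/
import Mathlib

section
/- Let ρ : [0,1] → ℝ be measurable and suppose there exists h > 0 such that h < ρ(t) < π² for almost every t ∈ [0,1]. If v : [0,1] → ℝ is continuously differentiable with v' absolutely continuous, v(0) = v(1) = 0, and v''(t) + ρ(t)v(t) = 0 for almost every t ∈ [0,1], then v is identically zero. -/
open MeasureTheory Set

open MeasureTheory Set

lemma tri_swap (f g : ℝ → ℝ) (hf : IntegrableOn f (Set.Ioc (0:ℝ) 1))
    (hg : IntegrableOn g (Set.Ioc (0:ℝ) 1)) :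
    (∫ t in Set.Ioc (0:ℝ) 1, f t * ∫ s in Set.Ioc (0:ℝ) t, g s)
      + (∫ s in Set.Ioc (0:ℝ) 1, g s * ∫ t in Set.Ioo (0:ℝ) s, f t)
      = (∫ t in Set.Ioc (0:ℝ) 1, f t) * ∫ s in Set.Ioc (0:ℝ) 1, g s := by
  set μ := volume.restrict (Set.Ioc (0:ℝ) 1) with hμ
  have hμf : Integrable f μ := hf
  have hμg : Integrable g μ := hg
  have hP : Integrable (fun p : ℝ × ℝ => f p.1 * g p.2) (μ.prod μ) := hμf.mul_prod hμg
  have hA : MeasurableSet {p : ℝ × ℝ | p.2 ≤ p.1} :=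
    measurableSet_le measurable_snd measurable_fst
  have h1 : ∫ p in {p : ℝ × ℝ | p.2 ≤ p.1}, f p.1 * g p.2 ∂(μ.prod μ)
      = ∫ t in Set.Ioc (0:ℝ) 1, f t * ∫ s in Set.Ioc (0:ℝ) t, g s := by
    rw [← integral_indicator hA, integral_prod _ (hP.indicator hA)]
    refine setIntegral_congr_fun measurableSet_Ioc (fun t ht => ?_)
    have : (fun s => ({p : ℝ × ℝ | p.2 ≤ p.1}).indicator (fun p : ℝ × ℝ => f p.1 * g p.2) (t, s))
        = fun s => (Set.Iic t).indicator (fun s => f t * g s) s := by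
      funext s
      by_cases hst : s ≤ t
      · simp [Set.indicator_apply, Set.mem_setOf_eq, hst]
      · simp [Set.indicator_apply, Set.mem_setOf_eq, hst]
    rw [this, integral_indicator measurableSet_Iic, hμ,
      Measure.restrict_restrict measurableSet_Iic]
    have hset : Set.Iic t ∩ Set.Ioc (0:ℝ) 1 = Set.Ioc 0 t := by
      ext x
      simp only [Set.mem_inter_iff, Set.mem_Iic, Set.mem_Ioc]
      exact ⟨fun ⟨h1, h2, h3⟩ => ⟨h2, h1⟩, fun ⟨h1, h2⟩ => ⟨h2, h1, h2.trans ht.2⟩⟩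
    rw [hset, integral_const_mul]
  have h2 : ∫ p in {p : ℝ × ℝ | p.2 ≤ p.1}ᶜ, f p.1 * g p.2 ∂(μ.prod μ)
      = ∫ s in Set.Ioc (0:ℝ) 1, g s * ∫ t in Set.Ioo (0:ℝ) s, f t := by
    rw [← integral_indicator hA.compl, integral_prod_symm _ ((hP.indicator hA.compl))]
    refine setIntegral_congr_fun measurableSet_Ioc (fun s hs => ?_)
    have : (fun t => ({p : ℝ × ℝ | p.2 ≤ p.1}ᶜ).indicator (fun p : ℝ × ℝ => f p.1 * g p.2) (t, s))
        = fun t => (Set.Iio s).indicator (fun t => f t * g s) t := by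
      funext t
      by_cases hst : t < s
      · simp [Set.indicator_apply, Set.mem_setOf_eq, hst, not_le.2 hst]
      · simp [Set.indicator_apply, Set.mem_setOf_eq, hst, not_lt.1 hst]
    rw [this, integral_indicator measurableSet_Iio, hμ,
      Measure.restrict_restrict measurableSet_Iio]
    have hset : Set.Iio s ∩ Set.Ioc (0:ℝ) 1 = Set.Ioo 0 s := by
      ext x
      simp only [Set.mem_inter_iff, Set.mem_Iio, Set.mem_Ioc, Set.mem_Ioo]
      exact ⟨fun ⟨h1, h2, h3⟩ => ⟨h2, h1⟩, fun ⟨h1, h2⟩ => ⟨h2, h1, (h2.trans_le hs.2).le⟩⟩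
    rw [hset, integral_mul_const, mul_comm]
  rw [← h1, ← h2, integral_add_compl hA hP, ← integral_prod_mul f g]
lemma parts (v' v'' φ φ' : ℝ → ℝ)
    (hint : IntervalIntegrable v'' volume 0 1)
    (hAC : ∀ t ∈ Set.Icc (0:ℝ) 1, v' t = v' 0 + ∫ s in (0:ℝ)..t, v'' s)
    (hv'c : ContinuousOn v' (Set.Icc 0 1))
    (hφ : ∀ t ∈ Set.Icc (0:ℝ) 1, HasDerivWithinAt φ (φ' t) (Set.Icc 0 1) t)
    (hφ'c : ContinuousOn φ' (Set.Icc 0 1)) :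
    (∫ t in (0:ℝ)..1, v'' t * φ t) + (∫ t in (0:ℝ)..1, v' t * φ' t)
      = v' 1 * φ 1 - v' 0 * φ 0 := by
  have hφc : ContinuousOn φ (Set.Icc 0 1) := fun t ht => (hφ t ht).continuousWithinAt
  have FTCφ : ∀ t ∈ Set.Icc (0:ℝ) 1, ∫ s in (0:ℝ)..t, φ' s = φ t - φ 0 := by
    intro t ht
    apply intervalIntegral.integral_eq_sub_of_hasDeriv_right_of_le ht.1
      (hφc.mono (Set.Icc_subset_Icc_right ht.2))
    · intro x hx
      have hx1 : x ∈ Set.Icc (0:ℝ) 1 := ⟨hx.1.le, (hx.2.trans_le ht.2).le⟩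
      exact ((hφ x hx1).hasDerivAt
        (Icc_mem_nhds hx.1 (hx.2.trans_le ht.2))).hasDerivWithinAt
    · have : Set.uIcc (0:ℝ) t = Set.Icc 0 t := Set.uIcc_of_le ht.1
      exact (hφ'c.mono (by rw [this]; exact Set.Icc_subset_Icc_right ht.2)).intervalIntegrable
  have FTCv'' : ∀ t ∈ Set.Icc (0:ℝ) 1, ∫ s in (0:ℝ)..t, v'' s = v' t - v' 0 := by
    intro t ht; rw [hAC t ht]; ring
  have hv''i : IntegrableOn v'' (Set.Ioc 0 1) := hint.1
  have hφ'i : IntegrableOn φ' (Set.Ioc 0 1) :=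
    (hφ'c.integrableOn_compact isCompact_Icc).mono_set Set.Ioc_subset_Icc_self
  have hswap := tri_swap v'' φ' hv''i hφ'i
  have hA : ∫ t in Set.Ioc (0:ℝ) 1, v'' t = v' 1 - v' 0 := by
    rw [← intervalIntegral.integral_of_le zero_le_one]
    exact FTCv'' 1 ⟨zero_le_one, le_refl 1⟩
  have hB : ∫ s in Set.Ioc (0:ℝ) 1, φ' s = φ 1 - φ 0 := by
    rw [← intervalIntegral.integral_of_le zero_le_one]
    exact FTCφ 1 ⟨zero_le_one, le_refl 1⟩
  have h1 : (∫ t in Set.Ioc (0:ℝ) 1, v'' t * ∫ s in Set.Ioc (0:ℝ) t, φ' s)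
      = ∫ t in Set.Ioc (0:ℝ) 1, (v'' t * φ t - v'' t * φ 0) := by
    refine setIntegral_congr_fun measurableSet_Ioc (fun t ht => ?_)
    rw [← intervalIntegral.integral_of_le ht.1.le, FTCφ t ⟨ht.1.le, ht.2⟩]; ring
  have h2 : (∫ s in Set.Ioc (0:ℝ) 1, φ' s * ∫ t in Set.Ioo (0:ℝ) s, v'' t)
      = ∫ s in Set.Ioc (0:ℝ) 1, (v' s * φ' s - v' 0 * φ' s) := by
    refine setIntegral_congr_fun measurableSet_Ioc (fun s hs => ?_)
    rw [← integral_Ioc_eq_integral_Ioo, ← intervalIntegral.integral_of_le hs.1.le,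
      FTCv'' s ⟨hs.1.le, hs.2⟩]; ring
  have hv''φ : IntegrableOn (fun t => v'' t * φ t) (Set.Ioc 0 1) :=
    (hint.mul_continuousOn (by rw [Set.uIcc_of_le zero_le_one]; exact hφc)).1
  have hv''c : IntegrableOn (fun t => v'' t * φ 0) (Set.Ioc 0 1) := hv''i.mul_const _
  have hv'φ' : IntegrableOn (fun s => v' s * φ' s) (Set.Ioc 0 1) :=
    ((hv'c.mul hφ'c).integrableOn_compact isCompact_Icc).mono_set Set.Ioc_subset_Icc_self
  have e1 : (∫ t in Set.Ioc (0:ℝ) 1, (v'' t * φ t - v'' t * φ 0))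
      = (∫ t in Set.Ioc (0:ℝ) 1, v'' t * φ t) - (v' 1 - v' 0) * φ 0 := by
    rw [integral_sub hv''φ hv''c, integral_mul_const, hA]
  have e2 : (∫ s in Set.Ioc (0:ℝ) 1, (v' s * φ' s - v' 0 * φ' s))
      = (∫ s in Set.Ioc (0:ℝ) 1, v' s * φ' s) - v' 0 * (φ 1 - φ 0) := by
    rw [integral_sub hv'φ' (hφ'i.const_mul _), integral_const_mul, hB]
  rw [h1, h2, e1, e2, hA, hB] at hswap
  rw [intervalIntegral.integral_of_le zero_le_one,
    intervalIntegral.integral_of_le zero_le_one]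
  linear_combination hswap
lemma picone (v v' : ℝ → ℝ)
    (hv : ∀ t ∈ Set.Icc (0:ℝ) 1, HasDerivWithinAt v (v' t) (Set.Icc 0 1) t)
    (hv'c : ContinuousOn v' (Set.Icc 0 1))
    (hv0 : v 0 = 0) (hv1 : v 1 = 0)
    (m : ℝ) (hm0 : 0 < m) (hmπ : m < Real.pi) :
    m ^ 2 * (∫ t in (0:ℝ)..1, v t ^ 2) ≤ ∫ t in (0:ℝ)..1, v' t ^ 2 := by
  have hIcc : Set.uIcc (0:ℝ) 1 = Set.Icc 0 1 := Set.uIcc_of_le zero_le_one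
  have hvc : ContinuousOn v (Set.Icc 0 1) := fun t ht => (hv t ht).continuousWithinAt
  set θ : ℝ → ℝ := fun t => m * t + (Real.pi - m) / 2 with hθdef
  have hsin : ∀ t ∈ Set.Icc (0:ℝ) 1, 0 < Real.sin (θ t) := by
    intro t ht
    apply Real.sin_pos_of_pos_of_lt_pi
    · have : 0 ≤ m * t := mul_nonneg hm0.le ht.1
      have : 0 < (Real.pi - m) / 2 := by linarith
      simp only [hθdef]; linarith
    · have : m * t ≤ m := by nlinarith [ht.2]
      simp only [hθdef]; linarith
  set g : ℝ → ℝ := fun t => m * Real.cos (θ t) / Real.sin (θ t) with hgdef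
  have hθd : ∀ t : ℝ, HasDerivAt θ m t := by
    intro t
    exact (((hasDerivAt_id t).const_mul m).add_const ((Real.pi - m) / 2)).congr_deriv (mul_one m)
  have hgd : ∀ t ∈ Set.Icc (0:ℝ) 1, HasDerivAt g (-(m ^ 2) - g t ^ 2) t := by
    intro t ht
    have hne : Real.sin (θ t) ≠ 0 := (hsin t ht).ne'
    have hnum : HasDerivAt (fun t => m * Real.cos (θ t)) (m * (-Real.sin (θ t) * m)) t :=
      ((Real.hasDerivAt_cos (θ t)).comp t (hθd t)).const_mul m
    have hden : HasDerivAt (fun t => Real.sin (θ t)) (Real.cos (θ t) * m) t :=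
      (Real.hasDerivAt_sin (θ t)).comp t (hθd t)
    have := hnum.div hden hne
    refine this.congr_deriv ?_
    have hsq : Real.sin (θ t) ^ 2 + Real.cos (θ t) ^ 2 = 1 := Real.sin_sq_add_cos_sq _
    rw [hgdef]
    field_simp
  have hvdAt : ∀ x ∈ Set.Ioo (0:ℝ) 1, HasDerivAt v (v' x) x := fun x hx =>
    (hv x ⟨hx.1.le, hx.2.le⟩).hasDerivAt (Icc_mem_nhds hx.1 hx.2)
  set G' : ℝ → ℝ := fun t => (-(m ^ 2) - g t ^ 2) * v t ^ 2 + g t * (2 * v t * v' t)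
    with hG'def
  have hGd : ∀ x ∈ Set.Ioo (0:ℝ) 1, HasDerivAt (fun t => g t * v t ^ 2) (G' x) x := by
    intro x hx
    have := (hgd x ⟨hx.1.le, hx.2.le⟩).mul ((hvdAt x hx).pow 2)
    refine this.congr_deriv ?_
    simp only [hG'def, Pi.pow_apply]
    push_cast
    ring
  have hgc : ContinuousOn g (Set.Icc 0 1) := by
    apply ContinuousOn.div
    · exact (continuous_const.mul (Real.continuous_cos.comp (by continuity))).continuousOn
    · exact (Real.continuous_sin.comp (by continuity)).continuousOn
    · exact fun t ht => (hsin t ht).ne'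
  have hG'c : ContinuousOn G' (Set.Icc 0 1) := by
    apply ContinuousOn.add
    · exact (continuousOn_const.sub (hgc.pow 2)).mul (hvc.pow 2)
    · exact hgc.mul ((continuousOn_const.mul hvc).mul hv'c)
  have hFTC : ∫ t in (0:ℝ)..1, G' t = 0 := by
    have := intervalIntegral.integral_eq_sub_of_hasDeriv_right_of_le zero_le_one
      (hgc.mul (hvc.pow 2))
      (fun x hx => (hGd x hx).hasDerivWithinAt)
      ((hG'c.mono hIcc.le).intervalIntegrable)
    rw [this, Pi.mul_apply, Pi.mul_apply, Pi.pow_apply, Pi.pow_apply, hv0, hv1]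
    ring
  have hnn : 0 ≤ ∫ t in (0:ℝ)..1, (v' t - g t * v t) ^ 2 :=
    intervalIntegral.integral_nonneg zero_le_one (fun u _ => sq_nonneg _)
  have hid : ∫ t in (0:ℝ)..1, (v' t - g t * v t) ^ 2
      = (∫ t in (0:ℝ)..1, v' t ^ 2) - (∫ t in (0:ℝ)..1, G' t)
        - m ^ 2 * ∫ t in (0:ℝ)..1, v t ^ 2 := by
    have hint1 : IntervalIntegrable (fun t => v' t ^ 2) volume 0 1 :=
      ((hv'c.pow 2).mono hIcc.le).intervalIntegrable
    have hint2 : IntervalIntegrable G' volume 0 1 :=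
      (hG'c.mono hIcc.le).intervalIntegrable
    have hint3 : IntervalIntegrable (fun t => m ^ 2 * v t ^ 2) volume 0 1 :=
      ((continuousOn_const.mul (hvc.pow 2)).mono
        hIcc.le).intervalIntegrable
    rw [← intervalIntegral.integral_const_mul, ← intervalIntegral.integral_sub hint1 hint2,
      ← intervalIntegral.integral_sub (hint1.sub hint2) hint3]
    apply intervalIntegral.integral_congr
    intro t _
    simp only [hG'def]
    ring
  rw [hid, hFTC] at hnn
  linarith

/-- if `h < ρ(t) < π²` a.e. on `[0,1]` and `v` is a `C¹` function with
absolutely continuous derivative satisfying `v'' + ρ v = 0` a.e. and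
`v(0) = v(1) = 0`, then `v ≡ 0` on `[0,1]`. -/
theorem stmt16 (ρ : ℝ → ℝ) (hρmeas : Measurable ρ)
    (h : ℝ) (hh : 0 < h)
    (hρ : ∀ᵐ t ∂(volume.restrict (Set.Icc (0:ℝ) 1)), h < ρ t ∧ ρ t < Real.pi ^ 2)
    (v v' v'' : ℝ → ℝ)
    (hv : ∀ t ∈ Set.Icc (0:ℝ) 1, HasDerivWithinAt v (v' t) (Set.Icc 0 1) t)
    (hv'c : ContinuousOn v' (Set.Icc 0 1))
    (hint : IntervalIntegrable v'' volume 0 1)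
    (hAC : ∀ t ∈ Set.Icc (0:ℝ) 1, v' t = v' 0 + ∫ s in (0:ℝ)..t, v'' s)
    (hode : ∀ᵐ t ∂(volume.restrict (Set.Icc (0:ℝ) 1)), v'' t + ρ t * v t = 0)
    (hv0 : v 0 = 0) (hv1 : v 1 = 0) :
    ∀ t ∈ Set.Icc (0:ℝ) 1, v t = 0 := by
  have hvc : ContinuousOn v (Set.Icc 0 1) := fun t ht => (hv t ht).continuousWithinAt
  set a := ∫ t in (0:ℝ)..1, v' t ^ 2 with ha
  set c := ∫ t in (0:ℝ)..1, v t ^ 2 with hc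
  -- Step 1: ∫ v'' v = -a
  have hparts := parts v' v'' v v' hint hAC hv'c hv hv'c
  rw [hv0, hv1] at hparts
  have hvv' : (∫ t in (0:ℝ)..1, v' t * v' t) = a := by
    rw [ha]; apply intervalIntegral.integral_congr; intro t _; ring
  have h1 : (∫ t in (0:ℝ)..1, v'' t * v t) = -a := by
    rw [hvv'] at hparts; linarith
  -- integrability of ρ v²
  obtain ⟨M, hM⟩ := isCompact_Icc.exists_bound_of_continuousOn hvc
  have hM0 : 0 ≤ M := le_trans (norm_nonneg _) (hM 0 ⟨le_refl 0, zero_le_one⟩)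
  have hρIoc : ∀ᵐ t ∂(volume.restrict (Set.Ioc (0:ℝ) 1)), h < ρ t ∧ ρ t < Real.pi ^ 2 :=
    ae_restrict_of_ae_restrict_of_subset Set.Ioc_subset_Icc_self hρ
  have hmeasρv2 : AEStronglyMeasurable (fun t => ρ t * v t ^ 2)
      (volume.restrict (Set.Ioc (0:ℝ) 1)) :=
    hρmeas.aemeasurable.aestronglyMeasurable.mul
      (((hvc.mono Set.Ioc_subset_Icc_self).pow 2).aestronglyMeasurable measurableSet_Ioc)
  have hρv2i : IntegrableOn (fun t => ρ t * v t ^ 2) (Set.Ioc 0 1) := by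
    apply Integrable.mono' (g := fun _ => Real.pi ^ 2 * M ^ 2)
      ((integrableOn_const_iff).2 (Or.inr (by simp))) hmeasρv2
    filter_upwards [hρIoc, ae_restrict_mem measurableSet_Ioc] with t hρt ht
    have hMt : |v t| ≤ M := hM t (Set.Ioc_subset_Icc_self ht)
    rw [Real.norm_eq_abs, abs_mul, abs_pow]
    have h1 : |ρ t| ≤ Real.pi ^ 2 := by
      rw [abs_le]; constructor <;> nlinarith [hρt.1, hρt.2]
    have h2 : |v t| ^ 2 ≤ M ^ 2 := by nlinarith [abs_nonneg (v t)]
    nlinarith [abs_nonneg (ρ t), abs_nonneg (v t), sq_nonneg (|v t|)]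
  -- Step 1b (ODE): ∫ ρ v² = a
  have hode' : ∀ᵐ t ∂(volume.restrict (Set.Ioc (0:ℝ) 1)),
      v'' t * v t = -(ρ t * v t ^ 2) := by
    filter_upwards [ae_restrict_of_ae_restrict_of_subset Set.Ioc_subset_Icc_self hode] with t h0
    have : v'' t = -(ρ t * v t) := by linarith
    rw [this]; ring
  have key1 : (∫ t in Set.Ioc (0:ℝ) 1, ρ t * v t ^ 2) = a := by
    have e1 : (∫ t in Set.Ioc (0:ℝ) 1, v'' t * v t)
        = ∫ t in Set.Ioc (0:ℝ) 1, -(ρ t * v t ^ 2) := integral_congr_ae hode'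
    rw [integral_neg] at e1
    rw [← intervalIntegral.integral_of_le zero_le_one, h1] at e1
    linarith
  -- Step 2: π² c ≤ a
  have ha0 : 0 ≤ a := intervalIntegral.integral_nonneg zero_le_one (fun u _ => sq_nonneg _)
  have hπc : Real.pi ^ 2 * c ≤ a := by
    by_contra hlt
    push_neg at hlt
    have hπ0 := Real.pi_pos
    have hc0 : 0 < c := by nlinarith
    set q := (a / c + Real.pi ^ 2) / 2 with hq
    have hac : a / c < Real.pi ^ 2 := (div_lt_iff₀ hc0).2 (by linarith)
    have hac0 : 0 ≤ a / c := div_nonneg ha0 hc0.le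
    have hq0 : 0 < q := by rw [hq]; positivity
    have hq1 : a / c < q := by rw [hq]; linarith
    have hqπ : q < Real.pi ^ 2 := by rw [hq]; linarith
    have hm2 : Real.sqrt q ^ 2 = q := Real.sq_sqrt hq0.le
    have hmπ : Real.sqrt q < Real.pi := by
      rw [show Real.pi = Real.sqrt (Real.pi ^ 2) from (Real.sqrt_sq hπ0.le).symm]
      exact Real.sqrt_lt_sqrt hq0.le hqπ
    have hpic := picone v v' hv hv'c hv0 hv1 (Real.sqrt q) (Real.sqrt_pos.2 hq0) hmπ
    rw [hm2] at hpic
    have : a < q * c := (div_lt_iff₀ hc0).1 hq1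
    linarith
  -- Step 3: v = 0 a.e. on Ioc 0 1
  have hcIoc : (∫ t in Set.Ioc (0:ℝ) 1, v t ^ 2) = c := by
    rw [hc, intervalIntegral.integral_of_le zero_le_one]
  have hv2i : IntegrableOn (fun t => v t ^ 2) (Set.Ioc 0 1) :=
    ((hvc.pow 2).integrableOn_compact isCompact_Icc).mono_set Set.Ioc_subset_Icc_self
  have hsubi : IntegrableOn (fun t => (Real.pi ^ 2 - ρ t) * v t ^ 2) (Set.Ioc 0 1) := by
    have : (fun t => (Real.pi ^ 2 - ρ t) * v t ^ 2)
        = fun t => Real.pi ^ 2 * v t ^ 2 - ρ t * v t ^ 2 := by funext t; ring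
    rw [this]
    exact (hv2i.const_mul _).sub hρv2i
  have hd0 : 0 ≤ᵐ[volume.restrict (Set.Ioc (0:ℝ) 1)]
      fun t => (Real.pi ^ 2 - ρ t) * v t ^ 2 := by
    filter_upwards [hρIoc] with t hρt
    have : 0 ≤ Real.pi ^ 2 - ρ t := by linarith [hρt.2]
    positivity
  have hdval : (∫ t in Set.Ioc (0:ℝ) 1, (Real.pi ^ 2 - ρ t) * v t ^ 2)
      = Real.pi ^ 2 * c - a := by
    have : (∫ t in Set.Ioc (0:ℝ) 1, (Real.pi ^ 2 - ρ t) * v t ^ 2)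
        = (∫ t in Set.Ioc (0:ℝ) 1, Real.pi ^ 2 * v t ^ 2)
          - ∫ t in Set.Ioc (0:ℝ) 1, ρ t * v t ^ 2 := by
      rw [← integral_sub (hv2i.const_mul _) hρv2i]
      apply integral_congr_ae
      filter_upwards with t
      ring
    rw [this, integral_const_mul, hcIoc, key1]
  have hdzero : (∫ t in Set.Ioc (0:ℝ) 1, (Real.pi ^ 2 - ρ t) * v t ^ 2) = 0 := by
    have hge : 0 ≤ ∫ t in Set.Ioc (0:ℝ) 1, (Real.pi ^ 2 - ρ t) * v t ^ 2 :=
      integral_nonneg_of_ae hd0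
    rw [hdval] at hge ⊢
    linarith
  have haez := (integral_eq_zero_iff_of_nonneg_ae hd0 hsubi).1 hdzero
  have hvae : ∀ᵐ t ∂(volume.restrict (Set.Ioc (0:ℝ) 1)), v t = 0 := by
    filter_upwards [haez, hρIoc] with t ht hρt
    have hpos : 0 < Real.pi ^ 2 - ρ t := by linarith [hρt.2]
    have : v t ^ 2 = 0 := by
      rcases mul_eq_zero.1 ht with h' | h'
      · exact absurd h' hpos.ne'
      · exact h'
    exact pow_eq_zero_iff (by norm_num : (2:ℕ) ≠ 0) |>.1 this
  -- conclude pointwise by continuity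
  have hnull : volume ({x | v x ≠ 0} ∩ Set.Ioc (0:ℝ) 1) = 0 := by
    have := hvae
    rw [MeasureTheory.ae_iff] at this
    rwa [Measure.restrict_apply' measurableSet_Ioc] at this
  intro t ht
  by_contra hvt
  have hcw := hvc t ht
  rw [Metric.continuousWithinAt_iff] at hcw
  obtain ⟨δ, hδ, H⟩ := hcw (|v t|) (abs_pos.2 hvt)
  set J := Set.Ioo (max 0 (t - δ)) (min 1 (t + δ)) with hJ
  have hlu : max 0 (t - δ) < min 1 (t + δ) := by
    apply max_lt
    · exact lt_min one_pos (by linarith [ht.1])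
    · exact lt_min (by linarith [ht.2]) (by linarith)
  have hJsub : J ⊆ {x | v x ≠ 0} ∩ Set.Ioc (0:ℝ) 1 := by
    intro x hx
    have hx1 : 0 < x := lt_of_le_of_lt (le_max_left _ _) hx.1
    have hx2 : x ≤ 1 := le_of_lt (lt_of_lt_of_le hx.2 (min_le_left _ _))
    have hdist : dist x t < δ := by
      rw [Real.dist_eq, abs_sub_lt_iff]
      constructor
      · have := lt_of_lt_of_le hx.2 (min_le_right _ _); linarith
      · have := lt_of_le_of_lt (le_max_right _ _) hx.1; linarith
    have hvx := H ⟨hx1.le, hx2⟩ hdist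
    constructor
    · intro hzx
      rw [hzx, Real.dist_eq, zero_sub, abs_neg] at hvx
      exact lt_irrefl _ hvx
    · exact ⟨hx1, hx2⟩
  have hJpos : 0 < volume J := by
    rw [hJ, Real.volume_Ioo]
    exact ENNReal.ofReal_pos.2 (by linarith)
  have : volume J ≤ volume ({x | v x ≠ 0} ∩ Set.Ioc (0:ℝ) 1) := measure_mono hJsub
  rw [hnull] at this
  exact hJpos.ne' (le_antisymm this (zero_le))
end

section
/- Let a, b : [0,1] → ℝ be continuous and define the bounded linear operator L on L²(0,1) by (Lh)(t) = -a(t)·∫₀¹ K(t,s)h(s) ds - b(t)·∫₀¹ K_t(t,s)h(s) ds. Then I + L is invertible on L²(0,1) if and only if for every y ∈ L²(0,1) there exists a unique continuously differentiable ξ : [0,1] → ℝ with ξ' absolutely continuous, ξ(0) = ξ(1) = 0, and ξ''(t) + b(t)ξ'(t) + a(t)ξ(t) = y(t) for almost every t ∈ [0,1]. -/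
open MeasureTheory

/-- The Green's function of `-d²/dt²` with Dirichlet boundary conditions. -/
noncomputable def Kgreen (t s : ℝ) : ℝ := min t s - t * s

/-- The partial derivative of the Green's function in its first variable:
`K_t(t,s) = 1 - s` for `t < s` and `K_t(t,s) = -s` for `t > s`. -/
noncomputable def KgreenT (t s : ℝ) : ℝ := if t < s then 1 - s else -s

/-- `ξ` (with continuous derivative `ξ'` and a.e. second derivative `ξ''`, `ξ'` being
absolutely continuous) solves `ξ'' + b ξ' + a ξ = y` a.e. on `(0,1)` with
`ξ(0) = ξ(1) = 0`. -/
def SolLinBVP (a b y : ℝ → ℝ) (ξ ξ' ξ'' : ℝ → ℝ) : Prop :=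
  (∀ t ∈ Set.Icc (0:ℝ) 1, HasDerivWithinAt ξ (ξ' t) (Set.Icc 0 1) t) ∧
  ContinuousOn ξ' (Set.Icc 0 1) ∧
  IntervalIntegrable ξ'' volume 0 1 ∧
  (∀ t ∈ Set.Icc (0:ℝ) 1, ξ' t = ξ' 0 + ∫ s in (0:ℝ)..t, ξ'' s) ∧
  ξ 0 = 0 ∧ ξ 1 = 0 ∧
  (∀ᵐ t ∂(volume.restrict (Set.Ioo (0:ℝ) 1)), ξ'' t + b t * ξ' t + a t * ξ t = y t)

namespace Stmt17Aux

open Set intervalIntegral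

noncomputable def xiF (h : ℝ → ℝ) (t : ℝ) : ℝ := ∫ s in (0:ℝ)..1, Kgreen t s * h s
noncomputable def etaF (h : ℝ → ℝ) (t : ℝ) : ℝ := ∫ s in (0:ℝ)..1, KgreenT t s * h s
noncomputable def C1 (h : ℝ → ℝ) : ℝ := ∫ s in (0:ℝ)..1, (1 - s) * h s

lemma restrict_Ioo_eq_Ioc :
    (volume : Measure ℝ).restrict (Ioo 0 1) = volume.restrict (Ioc 0 1) :=
  Measure.restrict_congr_set Ioo_ae_eq_Ioc

lemma measKT1 (s : ℝ) : Measurable (fun u => KgreenT u s) := by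
  unfold KgreenT
  exact Measurable.ite measurableSet_Iio measurable_const measurable_const

lemma measKT2 (t : ℝ) : Measurable (fun s => KgreenT t s) := by
  unfold KgreenT
  exact Measurable.ite measurableSet_Ioi
    (measurable_const.sub measurable_id) measurable_id.neg

lemma contK2 (t : ℝ) : Continuous (fun s => Kgreen t s) := by
  unfold Kgreen
  exact (continuous_const.min continuous_id).sub (continuous_const.mul continuous_id)

lemma intervalIntegrable_of_bdd {f : ℝ → ℝ} (hm : AEStronglyMeasurable f volume)
    {M : ℝ} (hM : ∀ u, ‖f u‖ ≤ M) (a b : ℝ) : IntervalIntegrable f volume a b := by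
  rw [intervalIntegrable_iff]
  exact Measure.integrableOn_of_bounded measure_Ioc_lt_top.ne hm (ae_of_all _ hM)

lemma KT_bound {u s : ℝ} (hs : s ∈ Ioc (0:ℝ) 1) : ‖KgreenT u s‖ ≤ 1 := by
  unfold KgreenT
  obtain ⟨h0, h1⟩ := hs
  split <;> rw [Real.norm_eq_abs, abs_le] <;> constructor <;> linarith

lemma intKT (s a b : ℝ) : IntervalIntegrable (fun u => KgreenT u s) volume a b := by
  refine intervalIntegrable_of_bdd (measKT1 s).aestronglyMeasurable
    (M := |1 - s| + |s|) (fun u => ?_) a b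
  unfold KgreenT
  split <;> rw [Real.norm_eq_abs]
  · nlinarith [abs_nonneg s, le_abs_self (1-s)]
  · rw [abs_neg]; nlinarith [abs_nonneg (1-s)]

section GreenOps

variable {h : ℝ → ℝ} (hI : IntegrableOn h (Ioc 0 1) volume)

include hI

lemma G1a (t : ℝ) : IntegrableOn (fun s => Kgreen t s * h s) (Ioc 0 1) volume := by
  refine hI.bdd_mul ((contK2 t).aestronglyMeasurable.restrict)
    (c := |t| + 1 + |t|) ?_
  filter_upwards [ae_restrict_mem measurableSet_Ioc] with s hs
  unfold Kgreen
  rw [Real.norm_eq_abs]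
  have h1 : |min t s| ≤ |t| + 1 := by
    cases le_total t s with
    | inl h => rw [min_eq_left h]; linarith [le_abs_self t, neg_abs_le t, abs_nonneg t]
    | inr h => rw [min_eq_right h]; rw [abs_le]; obtain ⟨a1, a2⟩ := hs;
               constructor <;> nlinarith [abs_nonneg t]
  have h2 : |t * s| ≤ |t| := by
    rw [abs_mul]; obtain ⟨a1, a2⟩ := hs
    nlinarith [abs_nonneg t, abs_of_pos a1]
  calc |min t s - t * s| ≤ |min t s| + |t * s| := abs_sub _ _
    _ ≤ |t| + 1 + |t| := by linarith

lemma G1b (t : ℝ) : IntegrableOn (fun s => KgreenT t s * h s) (Ioc 0 1) volume := by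
  refine hI.bdd_mul ((measKT2 t).aestronglyMeasurable.restrict) (c := 1) ?_
  filter_upwards [ae_restrict_mem measurableSet_Ioc] with s hs
  exact KT_bound hs

lemma G1c : IntegrableOn (fun s => (1 - s) * h s) (Ioc 0 1) volume := by
  refine hI.bdd_mul ((continuous_const.sub continuous_id).aestronglyMeasurable.restrict)
    (c := 1) ?_
  filter_upwards [ae_restrict_mem measurableSet_Ioc] with s hs
  rw [Real.norm_eq_abs, abs_le]; obtain ⟨a1, a2⟩ := hs; constructor <;> linarith

lemma G2 {t : ℝ} (ht : t ∈ Icc (0:ℝ) 1) :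
    etaF h t = C1 h - ∫ s in (0:ℝ)..t, h s := by
  have key : ∀ s : ℝ, KgreenT t s * h s
      = (1 - s) * h s - (Iic t).indicator h s := by
    intro s
    unfold KgreenT
    by_cases hc : t < s
    · rw [if_pos hc, indicator_of_notMem (by simpa using hc)]; ring
    · rw [if_neg hc, indicator_of_mem (by simpa using not_lt.mp hc)]; ring
  unfold etaF C1
  rw [intervalIntegral.integral_of_le zero_le_one,
      intervalIntegral.integral_of_le zero_le_one,
      intervalIntegral.integral_of_le ht.1]
  calc ∫ s in Ioc (0:ℝ) 1, KgreenT t s * h s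
      = ∫ s in Ioc (0:ℝ) 1, ((1 - s) * h s - (Iic t).indicator h s) := by
        exact setIntegral_congr_fun measurableSet_Ioc (fun s _ => key s)
    _ = (∫ s in Ioc (0:ℝ) 1, (1 - s) * h s) - ∫ s in Ioc (0:ℝ) 1, (Iic t).indicator h s := by
        exact integral_sub (G1c hI) (hI.indicator measurableSet_Iic)
    _ = (∫ s in Ioc (0:ℝ) 1, (1 - s) * h s) - ∫ s in Ioc (0:ℝ) t, h s := by
        rw [setIntegral_indicator measurableSet_Iic]
        have hset : Ioc (0:ℝ) 1 ∩ Iic t = Ioc 0 t := by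
          ext s
          simp only [mem_inter_iff, mem_Ioc, mem_Iic]
          constructor
          · rintro ⟨⟨h1, h2⟩, h3⟩; exact ⟨h1, h3⟩
          · rintro ⟨h1, h2⟩; exact ⟨⟨h1, le_trans h2 ht.2⟩, h2⟩
        rw [hset]

omit hI in
lemma G3 {t s : ℝ} (ht : 0 ≤ t) (hs : 0 < s) :
    ∫ u in (0:ℝ)..t, KgreenT u s = Kgreen t s := by
  have hne : ∀ᵐ u : ℝ ∂volume, u ≠ s := by
    have : (volume : Measure ℝ) {s} = 0 := measure_singleton s
    rw [MeasureTheory.ae_iff]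
    simp only [ne_eq, not_not]
    exact this
  rcases le_or_gt t s with hts | hst
  · have : ∫ u in (0:ℝ)..t, KgreenT u s = ∫ _u in (0:ℝ)..t, (1 - s) := by
      rw [intervalIntegral.integral_of_le ht, intervalIntegral.integral_of_le ht]
      refine integral_congr_ae ?_
      filter_upwards [ae_restrict_mem measurableSet_Ioc, ae_restrict_of_ae hne]
        with u hu hu'
      unfold KgreenT
      rw [if_pos (lt_of_le_of_ne (le_trans hu.2 hts) hu')]
    rw [this, intervalIntegral.integral_const, smul_eq_mul]
    unfold Kgreen
    rw [min_eq_left hts]; ring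
  · have hsplit : (∫ u in (0:ℝ)..s, KgreenT u s) + ∫ u in s..t, KgreenT u s
        = ∫ u in (0:ℝ)..t, KgreenT u s :=
      intervalIntegral.integral_add_adjacent_intervals (intKT s 0 s) (intKT s s t)
    have h1 : ∫ u in (0:ℝ)..s, KgreenT u s = s * (1 - s) := by
      have : ∫ u in (0:ℝ)..s, KgreenT u s = ∫ _u in (0:ℝ)..s, (1 - s) := by
        rw [intervalIntegral.integral_of_le hs.le, intervalIntegral.integral_of_le hs.le]
        refine integral_congr_ae ?_
        filter_upwards [ae_restrict_mem measurableSet_Ioc, ae_restrict_of_ae hne]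
          with u hu hu'
        unfold KgreenT
        rw [if_pos (lt_of_le_of_ne hu.2 hu')]
      rw [this, intervalIntegral.integral_const, smul_eq_mul]; ring
    have h2 : ∫ u in s..t, KgreenT u s = (t - s) * (-s) := by
      have : ∫ u in s..t, KgreenT u s = ∫ _u in s..t, (-s) := by
        rw [intervalIntegral.integral_of_le hst.le, intervalIntegral.integral_of_le hst.le]
        refine setIntegral_congr_fun measurableSet_Ioc (fun u hu => ?_)
        unfold KgreenT
        rw [if_neg (not_lt.mpr hu.1.le)]
      rw [this, intervalIntegral.integral_const, smul_eq_mul]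
    rw [← hsplit, h1, h2]
    unfold Kgreen
    rw [min_eq_right hst.le]; ring

end GreenOps

section GreenOps2

variable {h : ℝ → ℝ} (hI : IntegrableOn h (Ioc 0 1) volume)

include hI

lemma G4 {t : ℝ} (ht : t ∈ Icc (0:ℝ) 1) :
    xiF h t = ∫ u in (0:ℝ)..t, etaF h u := by
  have h0t := ht.1
  set μ : Measure ℝ := volume.restrict (Ioc 0 1) with hμ
  set ν : Measure ℝ := volume.restrict (Ioc 0 t) with hν
  have hνfin : IsFiniteMeasure ν := by
    constructor
    rw [hν, Measure.restrict_apply_univ]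
    exact measure_Ioc_lt_top
  have hprod : μ.prod ν
      = (volume.prod volume).restrict ((Ioc (0:ℝ) 1) ×ˢ (Ioc (0:ℝ) t)) :=
    Measure.prod_restrict _ _
  have hbase : Integrable (fun p : ℝ × ℝ => h p.1 * (1:ℝ)) (μ.prod ν) :=
    Integrable.mul_prod hI (integrable_const 1)
  have hKm : AEStronglyMeasurable (fun p : ℝ × ℝ => KgreenT p.2 p.1) (μ.prod ν) := by
    have : Measurable (fun p : ℝ × ℝ => KgreenT p.2 p.1) := by
      unfold KgreenT
      exact Measurable.ite (measurableSet_lt measurable_snd measurable_fst)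
        (measurable_const.sub measurable_fst) measurable_fst.neg
    exact this.aestronglyMeasurable
  have hKbd : ∀ᵐ p : ℝ × ℝ ∂(μ.prod ν), ‖KgreenT p.2 p.1‖ ≤ 1 := by
    rw [hprod]
    filter_upwards [ae_restrict_mem (measurableSet_Ioc.prod measurableSet_Ioc)]
      with p hp
    exact KT_bound hp.1
  have hint : Integrable (Function.uncurry fun s u => KgreenT u s * h s) (μ.prod ν) := by
    have := hbase.bdd_mul hKm hKbd
    simp only [mul_one] at this
    exact this
  have swap := MeasureTheory.integral_integral_swap hint
  have hLHS : (∫ s, (∫ u, KgreenT u s * h s ∂ν) ∂μ) = xiF h t := by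
    rw [xiF, intervalIntegral.integral_of_le zero_le_one]
    refine setIntegral_congr_fun measurableSet_Ioc (fun s hs => ?_)
    rw [MeasureTheory.integral_mul_const]
    have : ∫ u, KgreenT u s ∂ν = ∫ u in (0:ℝ)..t, KgreenT u s := by
      rw [intervalIntegral.integral_of_le h0t]
    rw [this, G3 h0t hs.1]
  have hRHS : (∫ u, (∫ s, KgreenT u s * h s ∂μ) ∂ν) = ∫ u in (0:ℝ)..t, etaF h u := by
    rw [intervalIntegral.integral_of_le h0t]
    refine setIntegral_congr_fun measurableSet_Ioc (fun u _ => ?_)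
    rw [etaF, intervalIntegral.integral_of_le zero_le_one]
  rw [← hLHS, swap, hRHS]

lemma G5 {t : ℝ} (ht : t ∈ Icc (0:ℝ) 1) :
    etaF h t = etaF h 0 + ∫ s in (0:ℝ)..t, -h s := by
  rw [G2 hI ht, G2 hI ⟨le_refl 0, zero_le_one⟩, intervalIntegral.integral_neg,
    intervalIntegral.integral_same]
  ring

lemma G6 : ContinuousOn (etaF h) (Icc 0 1) := by
  have hIcc : IntegrableOn h (uIcc (0:ℝ) 1) volume := by
    rw [uIcc_of_le zero_le_one]
    exact (integrableOn_Icc_iff_integrableOn_Ioc).mpr hI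
  have hcont : ContinuousOn (fun t => C1 h - ∫ s in (0:ℝ)..t, h s) (Icc 0 1) := by
    have := continuousOn_primitive_interval (f := h) (a := 0) (b := 1) (μ := volume) hIcc
    rw [uIcc_of_le zero_le_one] at this
    exact continuousOn_const.sub this
  exact hcont.congr (fun t ht => G2 hI ht)

lemma G7 {t : ℝ} (ht : t ∈ Icc (0:ℝ) 1) :
    HasDerivWithinAt (xiF h) (etaF h t) (Icc 0 1) t := by
  set E : ℝ → ℝ := IccExtend zero_le_one ((Icc (0:ℝ) 1).restrict (etaF h)) with hE
  have hEcont : Continuous E :=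
    Continuous.Icc_extend' (continuousOn_iff_continuous_restrict.mp (G6 hI))
  have hagree : ∀ u ∈ Icc (0:ℝ) 1, E u = etaF h u := by
    intro u hu
    rw [hE, IccExtend_of_mem _ _ hu]
    rfl
  have hprim : ∀ u ∈ Icc (0:ℝ) 1, xiF h u = ∫ x in (0:ℝ)..u, E x := by
    intro u hu
    rw [G4 hI hu, intervalIntegral.integral_of_le hu.1,
      intervalIntegral.integral_of_le hu.1]
    refine setIntegral_congr_fun measurableSet_Ioc (fun x hx => ?_)
    exact (hagree x ⟨hx.1.le, le_trans hx.2 hu.2⟩).symm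
  have hD : HasDerivAt (fun u => ∫ x in (0:ℝ)..u, E x) (E t) t :=
    intervalIntegral.integral_hasDerivAt_right (hEcont.intervalIntegrable _ _)
      (hEcont.aestronglyMeasurable.stronglyMeasurableAtFilter)
      hEcont.continuousAt
  have := (hD.hasDerivWithinAt (s := Icc 0 1)).congr
    (fun u hu => hprim u hu) (hprim t ht)
  rwa [hagree t ht] at this

lemma G8a : xiF h 0 = 0 := by
  rw [xiF, intervalIntegral.integral_of_le zero_le_one]
  have : ∀ s ∈ Ioc (0:ℝ) 1, Kgreen 0 s * h s = (fun _ => (0:ℝ)) s := by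
    intro s hs
    unfold Kgreen
    rw [min_eq_left hs.1.le]
    ring
  rw [setIntegral_congr_fun measurableSet_Ioc this]
  simp

lemma G8b : xiF h 1 = 0 := by
  rw [xiF, intervalIntegral.integral_of_le zero_le_one]
  have : ∀ s ∈ Ioc (0:ℝ) 1, Kgreen 1 s * h s = (fun _ => (0:ℝ)) s := by
    intro s hs
    unfold Kgreen
    rw [min_eq_right hs.2]
    ring
  rw [setIntegral_congr_fun measurableSet_Ioc this]
  simp

end GreenOps2

lemma G9 {h h' : ℝ → ℝ} (hae : h =ᵐ[volume.restrict (Ioc (0:ℝ) 1)] h') :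
    (∀ t, xiF h t = xiF h' t) ∧ (∀ t, etaF h t = etaF h' t) := by
  constructor
  · intro t
    unfold xiF
    rw [intervalIntegral.integral_of_le zero_le_one,
      intervalIntegral.integral_of_le zero_le_one]
    exact integral_congr_ae (hae.mono fun s hs => by simp only []; rw [hs])
  · intro t
    unfold etaF
    rw [intervalIntegral.integral_of_le zero_le_one,
      intervalIntegral.integral_of_le zero_le_one]
    exact integral_congr_ae (hae.mono fun s hs => by simp only []; rw [hs])

lemma ftc2 {f f' : ℝ → ℝ} (hd : ∀ u ∈ Icc (0:ℝ) 1, HasDerivWithinAt f (f' u) (Icc 0 1) u)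
    (hc : ContinuousOn f' (Icc 0 1)) {t : ℝ} (ht : t ∈ Icc (0:ℝ) 1) :
    ∫ u in (0:ℝ)..t, f' u = f t - f 0 := by
  refine intervalIntegral.integral_eq_sub_of_hasDeriv_right_of_le ht.1 ?_ ?_ ?_
  · exact fun u hu =>
      ((hd u ⟨hu.1, le_trans hu.2 ht.2⟩).continuousWithinAt).mono
        (Icc_subset_Icc le_rfl ht.2)
  · intro x hx
    have hx1 : x ∈ Icc (0:ℝ) 1 := ⟨hx.1.le, le_trans hx.2.le ht.2⟩
    refine (hd x hx1).mono_of_mem_nhdsWithin ?_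
    rw [mem_nhdsWithin]
    refine ⟨Iio 1, isOpen_Iio, lt_of_lt_of_le hx.2 ht.2, fun z hz => ?_⟩
    exact ⟨le_of_lt (lt_trans hx.1 hz.2), hz.1.le⟩
  · have : ContinuousOn f' (uIcc 0 t) := by
      rw [uIcc_of_le ht.1]
      exact hc.mono (Icc_subset_Icc le_rfl ht.2)
    exact this.intervalIntegrable

lemma rep {ξ ξ' ξ'' : ℝ → ℝ}
    (hd : ∀ t ∈ Icc (0:ℝ) 1, HasDerivWithinAt ξ (ξ' t) (Icc 0 1) t)
    (hc : ContinuousOn ξ' (Icc 0 1))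
    (hi : IntervalIntegrable ξ'' volume 0 1)
    (hprim : ∀ t ∈ Icc (0:ℝ) 1, ξ' t = ξ' 0 + ∫ s in (0:ℝ)..t, ξ'' s)
    (h0 : ξ 0 = 0) (h1 : ξ 1 = 0) :
    ∀ t ∈ Icc (0:ℝ) 1,
      ξ t = xiF (fun s => -ξ'' s) t ∧ ξ' t = etaF (fun s => -ξ'' s) t := by
  set g : ℝ → ℝ := fun s => -ξ'' s with hg
  have hIg : IntegrableOn g (Ioc 0 1) volume :=
    ((intervalIntegrable_iff_integrableOn_Ioc_of_le zero_le_one).mp hi).neg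
  set c : ℝ := C1 g - ξ' 0 with hcdef
  have heta : ∀ t ∈ Icc (0:ℝ) 1, etaF g t = ξ' t + c := by
    intro t ht
    rw [G2 hIg ht]
    have : ∫ s in (0:ℝ)..t, g s = -∫ s in (0:ℝ)..t, ξ'' s := by
      rw [hg, intervalIntegral.integral_neg]
    rw [this, hprim t ht]
    ring
  have hxi : ∀ t ∈ Icc (0:ℝ) 1, xiF g t = ξ t + c * t := by
    intro t ht
    rw [G4 hIg ht]
    have hcongr : ∫ u in (0:ℝ)..t, etaF g u = ∫ u in (0:ℝ)..t, (ξ' u + c) := by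
      rw [intervalIntegral.integral_of_le ht.1, intervalIntegral.integral_of_le ht.1]
      exact setIntegral_congr_fun measurableSet_Ioc
        (fun u hu => heta u ⟨hu.1.le, le_trans hu.2 ht.2⟩)
    have hiξ' : IntervalIntegrable ξ' volume 0 t := by
      have : ContinuousOn ξ' (uIcc 0 t) := by
        rw [uIcc_of_le ht.1]
        exact hc.mono (Icc_subset_Icc le_rfl ht.2)
      exact this.intervalIntegrable
    rw [hcongr, intervalIntegral.integral_add hiξ' intervalIntegrable_const,
      ftc2 hd hc ht, h0, intervalIntegral.integral_const, smul_eq_mul]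
    ring
  have hc0 : c = 0 := by
    have := hxi 1 ⟨zero_le_one, le_refl 1⟩
    rw [G8b hIg, h1] at this
    linarith
  intro t ht
  constructor
  · rw [hxi t ht, hc0]; ring
  · rw [heta t ht, hc0]; ring

end Stmt17Aux

open Stmt17Aux Set in
/-- `I + L` is invertible on `L²(0,1)` iff the linear boundary value
problem `ξ'' + b ξ' + a ξ = y`, `ξ(0)=ξ(1)=0` is uniquely solvable for every
`y ∈ L²(0,1)`. -/
theorem stmt17 (a b : ℝ → ℝ)
    (ha : ContinuousOn a (Set.Icc 0 1)) (hb : ContinuousOn b (Set.Icc 0 1))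
    (L : Lp ℝ 2 (volume.restrict (Set.Ioo (0:ℝ) 1)) →L[ℝ]
      Lp ℝ 2 (volume.restrict (Set.Ioo (0:ℝ) 1)))
    (hL : ∀ g : Lp ℝ 2 (volume.restrict (Set.Ioo (0:ℝ) 1)),
      ∀ᵐ t ∂(volume.restrict (Set.Ioo (0:ℝ) 1)),
        (L g : ℝ → ℝ) t = -(a t) * (∫ s in (0:ℝ)..1, Kgreen t s * (g : ℝ → ℝ) s)
          - b t * (∫ s in (0:ℝ)..1, KgreenT t s * (g : ℝ → ℝ) s)) :
    Function.Bijective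
        (fun x : Lp ℝ 2 (volume.restrict (Set.Ioo (0:ℝ) 1)) => x + L x)
    ↔ ∀ y : Lp ℝ 2 (volume.restrict (Set.Ioo (0:ℝ) 1)),
        (∃ ξ ξ' ξ'' : ℝ → ℝ, SolLinBVP a b (y : ℝ → ℝ) ξ ξ' ξ'') ∧
        (∀ ξ₁ ξ₁' ξ₁'' ξ₂ ξ₂' ξ₂'' : ℝ → ℝ,
          SolLinBVP a b (y : ℝ → ℝ) ξ₁ ξ₁' ξ₁'' →
          SolLinBVP a b (y : ℝ → ℝ) ξ₂ ξ₂' ξ₂'' →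
          Set.EqOn ξ₁ ξ₂ (Set.Icc 0 1)) := by
  classical
  have hμfin : IsFiniteMeasure (volume.restrict (Ioo (0:ℝ) 1)) := by
    constructor
    rw [Measure.restrict_apply_univ]
    exact measure_Ioo_lt_top
  have hint : ∀ g : Lp ℝ 2 (volume.restrict (Ioo (0:ℝ) 1)),
      IntegrableOn (⇑g) (Ioc 0 1) volume := by
    intro g
    have h2 := (Lp.memLp g).integrable one_le_two
    have h3 : IntegrableOn (⇑g) (Ioo 0 1) volume := h2
    exact h3.congr_set_ae Ioo_ae_eq_Ioc.symm
  -- a.e.-equality transfer from Ioo-restrict to Ioc-restrict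
  have htrans : ∀ {f₁ f₂ : ℝ → ℝ}, f₁ =ᵐ[volume.restrict (Ioo (0:ℝ) 1)] f₂ →
      f₁ =ᵐ[volume.restrict (Ioc (0:ℝ) 1)] f₂ := by
    intro f₁ f₂ hf
    rwa [restrict_Ioo_eq_Ioc] at hf
  constructor
  · -- invertibility implies unique solvability
    intro hbij y
    constructor
    · -- existence
      obtain ⟨g, hg⟩ := hbij.2 (-y)
      have hg' : g + L g = -y := hg
      have hIg := hint g
      refine ⟨xiF ⇑g, etaF ⇑g, fun t => -(⇑g t),
        fun t ht => G7 hIg ht, G6 hIg, ?_, fun t ht => G5 hIg ht, G8a hIg, G8b hIg, ?_⟩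
      · rw [intervalIntegrable_iff_integrableOn_Ioc_of_le zero_le_one]
        exact hIg.neg
      · have h1 : ⇑g + ⇑(L g) =ᵐ[volume.restrict (Ioo (0:ℝ) 1)] -⇑y := by
          have h2 := (Lp.coeFn_add g (L g)).symm
          rw [hg'] at h2
          exact h2.trans (Lp.coeFn_neg y)
        filter_upwards [hL g, h1] with t ht1 ht2
        have ht1' : (⇑(L g)) t = -(a t) * xiF (⇑g) t - b t * etaF (⇑g) t := ht1
        have ht2' : (⇑g) t + (⇑(L g)) t = -(⇑y t) := ht2
        linarith
    · -- uniqueness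
      intro ξ₁ ξ₁' ξ₁'' ξ₂ ξ₂' ξ₂'' hs1 hs2
      obtain ⟨hd1, hc1, hi1, hp1, h01, h11, ho1⟩ := hs1
      obtain ⟨hd2, hc2, hi2, hp2, h02, h12, ho2⟩ := hs2
      set δ : ℝ → ℝ := fun t => ξ₁ t - ξ₂ t with hδ
      set δ' : ℝ → ℝ := fun t => ξ₁' t - ξ₂' t with hδ'
      set δ'' : ℝ → ℝ := fun t => ξ₁'' t - ξ₂'' t with hδ''
      have hdd : ∀ t ∈ Icc (0:ℝ) 1, HasDerivWithinAt δ (δ' t) (Icc 0 1) t :=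
        fun t ht => (hd1 t ht).sub (hd2 t ht)
      have hcc : ContinuousOn δ' (Icc 0 1) := hc1.sub hc2
      have hii : IntervalIntegrable δ'' volume 0 1 := hi1.sub hi2
      have hpp : ∀ t ∈ Icc (0:ℝ) 1, δ' t = δ' 0 + ∫ s in (0:ℝ)..t, δ'' s := by
        intro t ht
        have hsub : uIcc 0 t ⊆ uIcc (0:ℝ) 1 := by
          rw [uIcc_of_le ht.1, uIcc_of_le zero_le_one]
          exact Icc_subset_Icc le_rfl ht.2
        show ξ₁' t - ξ₂' t = (ξ₁' 0 - ξ₂' 0) + ∫ s in (0:ℝ)..t, (ξ₁'' s - ξ₂'' s)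
        rw [intervalIntegral.integral_sub (hi1.mono_set hsub) (hi2.mono_set hsub)]
        have e1 := hp1 t ht
        have e2 := hp2 t ht
        linarith
      have h0δ : δ 0 = 0 := by rw [hδ]; simp [h01, h02]
      have h1δ : δ 1 = 0 := by rw [hδ]; simp [h11, h12]
      have hrep := rep hdd hcc hii hpp h0δ h1δ
      have hoo : ∀ᵐ t ∂(volume.restrict (Ioo (0:ℝ) 1)),
          δ'' t + b t * δ' t + a t * δ t = 0 := by
        filter_upwards [ho1, ho2] with t e1 e2
        show ξ₁'' t - ξ₂'' t + b t * (ξ₁' t - ξ₂' t) + a t * (ξ₁ t - ξ₂ t) = 0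
        linarith
      -- build the L² element
      have hcδ : ContinuousOn δ (Icc 0 1) := fun t ht => (hdd t ht).continuousWithinAt
      have hcont : ContinuousOn (fun t => b t * δ' t + a t * δ t) (Icc 0 1) :=
        (hb.mul hcc).add (ha.mul hcδ)
      obtain ⟨M, hM⟩ := isCompact_Icc.exists_bound_of_continuousOn hcont
      have hmem : MemLp (fun t => b t * δ' t + a t * δ t) 2
          (volume.restrict (Ioo (0:ℝ) 1)) := by
        refine MemLp.of_bound
          ((hcont.mono Ioo_subset_Icc_self).aestronglyMeasurable measurableSet_Ioo) M ?_
        filter_upwards [ae_restrict_mem measurableSet_Ioo] with t ht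
        exact hM t (Ioo_subset_Icc_self ht)
      set h : Lp ℝ 2 (volume.restrict (Ioo (0:ℝ) 1)) := hmem.toLp _ with hh
      have hcoe : ⇑h =ᵐ[volume.restrict (Ioo (0:ℝ) 1)]
          (fun t => b t * δ' t + a t * δ t) := MemLp.coeFn_toLp hmem
      have hae2 : (fun t => b t * δ' t + a t * δ t)
          =ᵐ[volume.restrict (Ioo (0:ℝ) 1)] (fun t => -δ'' t) := by
        filter_upwards [hoo] with t e
        show b t * δ' t + a t * δ t = -δ'' t
        linarith
      have hG9 := G9 (htrans (hcoe.trans hae2))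
      have hz : h + L h = 0 := by
        apply Lp.ext
        have h0c := Lp.coeFn_zero ℝ 2 (volume.restrict (Ioo (0:ℝ) 1))
        filter_upwards [Lp.coeFn_add h (L h), hL h, hcoe, h0c,
          ae_restrict_mem measurableSet_Ioo] with t e1 e2 e3 e4 ht
        have htIcc : t ∈ Icc (0:ℝ) 1 := Ioo_subset_Icc_self ht
        have e2' : (⇑(L h)) t = -(a t) * xiF (⇑h) t - b t * etaF (⇑h) t := e2
        have hx : xiF (⇑h) t = δ t := by
          rw [hG9.1 t]
          exact ((hrep t htIcc).1).symm
        have he : etaF (⇑h) t = δ' t := by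
          rw [hG9.2 t]
          exact ((hrep t htIcc).2).symm
        have e1' : (⇑(h + L h)) t = ⇑h t + ⇑(L h) t := e1
        rw [e1', e4, Pi.zero_apply, e3, e2', hx, he]
        ring
      have hzero : h = 0 := by
        apply hbij.1
        show h + L h = 0 + L 0
        rw [hz, map_zero, add_zero]
      have hzc : ⇑h =ᵐ[volume.restrict (Ioo (0:ℝ) 1)] (0 : ℝ → ℝ) := by
        rw [hzero]
        exact Lp.coeFn_zero ℝ 2 _
      have hfun0 : (fun t => b t * δ' t + a t * δ t)
          =ᵐ[volume.restrict (Ioo (0:ℝ) 1)] (0 : ℝ → ℝ) := hcoe.symm.trans hzc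
      have hδ''0 : δ'' =ᵐ[volume.restrict (Ioo (0:ℝ) 1)] 0 := by
        filter_upwards [hoo, hfun0] with t e1 e2
        have : b t * δ' t + a t * δ t = 0 := e2
        simp only [Pi.zero_apply] at *
        linarith
      have hconst : ∀ t ∈ Icc (0:ℝ) 1, δ' t = δ' 0 := by
        intro t ht
        rw [hpp t ht]
        have : ∫ s in (0:ℝ)..t, δ'' s = 0 := by
          rw [intervalIntegral.integral_of_le ht.1]
          have h1 : δ'' =ᵐ[volume.restrict (Ioc (0:ℝ) t)] 0 :=
            ae_restrict_of_ae_restrict_of_subset (Ioc_subset_Ioc le_rfl ht.2)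
              (htrans hδ''0)
          rw [integral_congr_ae h1]
          simp
        rw [this]; ring
      have hδlin : ∀ t ∈ Icc (0:ℝ) 1, δ t = t * δ' 0 := by
        intro t ht
        have hf := ftc2 hdd hcc ht
        have : ∫ u in (0:ℝ)..t, δ' u = ∫ _u in (0:ℝ)..t, δ' 0 := by
          rw [intervalIntegral.integral_of_le ht.1, intervalIntegral.integral_of_le ht.1]
          exact setIntegral_congr_fun measurableSet_Ioc
            (fun u hu => hconst u ⟨hu.1.le, le_trans hu.2 ht.2⟩)
        rw [this, intervalIntegral.integral_const, smul_eq_mul] at hf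
        rw [h0δ] at hf
        linear_combination -hf
      have hδ'00 : δ' 0 = 0 := by
        have := hδlin 1 ⟨zero_le_one, le_refl 1⟩
        rw [h1δ, one_mul] at this
        exact this.symm
      intro t ht
      have := hδlin t ht
      rw [hδ'00, mul_zero] at this
      have : ξ₁ t - ξ₂ t = 0 := this
      linarith
  · -- unique solvability implies invertibility
    intro hsol
    constructor
    · -- injective
      intro x₁ x₂ hx
      have hx' : x₁ + L x₁ = x₂ + L x₂ := hx
      set d := x₁ - x₂ with hd
      have hd0 : d + L d = 0 := by
        have : d + L d = (x₁ + L x₁) - (x₂ + L x₂) := by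
          rw [hd, map_sub]; abel
        rw [this, hx', sub_self]
      have hId := hint d
      have hode : ∀ᵐ t ∂(volume.restrict (Ioo (0:ℝ) 1)),
          (fun t => -(⇑d t)) t + b t * etaF (⇑d) t + a t * xiF (⇑d) t
            = (⇑(0 : Lp ℝ 2 (volume.restrict (Ioo (0:ℝ) 1)))) t := by
        have h1 := (Lp.coeFn_add d (L d)).symm
        rw [hd0] at h1
        filter_upwards [hL d, h1, Lp.coeFn_zero ℝ 2 (volume.restrict (Ioo (0:ℝ) 1))]
          with t e1 e2 e3
        have e1' : (⇑(L d)) t = -(a t) * xiF (⇑d) t - b t * etaF (⇑d) t := e1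
        have e2' : (⇑d) t + (⇑(L d)) t = ⇑(0 : Lp ℝ 2 (volume.restrict (Ioo (0:ℝ) 1))) t :=
          e2
        show -(⇑d t) + b t * etaF (⇑d) t + a t * xiF (⇑d) t
          = ⇑(0 : Lp ℝ 2 (volume.restrict (Ioo (0:ℝ) 1))) t
        rw [e3] at e2' ⊢
        simp only [Pi.zero_apply] at e2' ⊢
        linarith
      have sol_d : SolLinBVP a b
          (⇑(0 : Lp ℝ 2 (volume.restrict (Ioo (0:ℝ) 1))))
          (xiF ⇑d) (etaF ⇑d) (fun t => -(⇑d t)) := by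
        refine ⟨fun t ht => G7 hId ht, G6 hId, ?_, fun t ht => G5 hId ht,
          G8a hId, G8b hId, hode⟩
        rw [intervalIntegrable_iff_integrableOn_Ioc_of_le zero_le_one]
        exact hId.neg
      have sol_0 : SolLinBVP a b
          (⇑(0 : Lp ℝ 2 (volume.restrict (Ioo (0:ℝ) 1))))
          (fun _ => 0) (fun _ => 0) (fun _ => 0) := by
        refine ⟨fun t ht => hasDerivWithinAt_const t _ 0, continuousOn_const,
          intervalIntegrable_const, by simp, rfl, rfl, ?_⟩
        filter_upwards [Lp.coeFn_zero ℝ 2 (volume.restrict (Ioo (0:ℝ) 1))] with t e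
        rw [e]
        simp
      have hEq := (hsol 0).2 _ _ _ _ _ _ sol_d sol_0
      have hetaz : ∀ t ∈ Icc (0:ℝ) 1, etaF (⇑d) t = 0 := by
        intro t ht
        have h7 := G7 hId ht
        have hz : HasDerivWithinAt (fun _ : ℝ => (0:ℝ)) (etaF (⇑d) t) (Icc 0 1) t :=
          h7.congr (fun u hu => (hEq hu).symm) ((hEq ht).symm)
        have hz0 : HasDerivWithinAt (fun _ : ℝ => (0:ℝ)) 0 (Icc 0 1) t :=
          hasDerivWithinAt_const t _ 0
        have hu := uniqueDiffOn_Icc (zero_lt_one) t ht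
        rw [← hz.derivWithin hu, hz0.derivWithin hu]
      have hd00 : ⇑d =ᵐ[volume.restrict (Ioo (0:ℝ) 1)]
          ⇑(0 : Lp ℝ 2 (volume.restrict (Ioo (0:ℝ) 1))) := by
        filter_upwards [hode, Lp.coeFn_zero ℝ 2 (volume.restrict (Ioo (0:ℝ) 1)),
          ae_restrict_mem measurableSet_Ioo] with t e1 e2 e3
        have htIcc : t ∈ Icc (0:ℝ) 1 := Ioo_subset_Icc_self e3
        rw [e2] at e1 ⊢
        rw [hetaz t htIcc, hEq htIcc] at e1
        simp only [Pi.zero_apply] at e1 ⊢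
        linarith [e1]
      have : d = 0 := Lp.ext hd00
      rw [hd] at this
      exact sub_eq_zero.mp this
    · -- surjective
      intro y₀
      obtain ⟨⟨ξ, ξ', ξ'', hsolξ⟩, _⟩ := hsol (-y₀)
      obtain ⟨hdξ, hcξ', hiξ, hpξ, h0ξ, h1ξ, hoξ⟩ := hsolξ
      have hcξ : ContinuousOn ξ (Icc 0 1) := fun t ht => (hdξ t ht).continuousWithinAt
      have hcont : ContinuousOn (fun t => b t * ξ' t + a t * ξ t) (Icc 0 1) :=
        (hb.mul hcξ').add (ha.mul hcξ)
      obtain ⟨M, hM⟩ := isCompact_Icc.exists_bound_of_continuousOn hcont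
      have hmem2 : MemLp (fun t => b t * ξ' t + a t * ξ t) 2
          (volume.restrict (Ioo (0:ℝ) 1)) := by
        refine MemLp.of_bound
          ((hcont.mono Ioo_subset_Icc_self).aestronglyMeasurable measurableSet_Ioo) M ?_
        filter_upwards [ae_restrict_mem measurableSet_Ioo] with t ht
        exact hM t (Ioo_subset_Icc_self ht)
      have hmem : MemLp (fun t => ⇑y₀ t + (b t * ξ' t + a t * ξ t)) 2
          (volume.restrict (Ioo (0:ℝ) 1)) := (Lp.memLp y₀).add hmem2
      set h : Lp ℝ 2 (volume.restrict (Ioo (0:ℝ) 1)) := hmem.toLp _ with hh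
      have hcoe : ⇑h =ᵐ[volume.restrict (Ioo (0:ℝ) 1)]
          (fun t => ⇑y₀ t + (b t * ξ' t + a t * ξ t)) := MemLp.coeFn_toLp hmem
      have hrep := rep hdξ hcξ' hiξ hpξ h0ξ h1ξ
      have hae : (fun t => ⇑y₀ t + (b t * ξ' t + a t * ξ t))
          =ᵐ[volume.restrict (Ioo (0:ℝ) 1)] (fun s => -ξ'' s) := by
        filter_upwards [hoξ, Lp.coeFn_neg y₀] with t e1 e2
        have e2' : (⇑(-y₀)) t = -(⇑y₀ t) := e2
        rw [e2'] at e1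
        show ⇑y₀ t + (b t * ξ' t + a t * ξ t) = -ξ'' t
        linarith
      have hG9 := G9 (htrans (hcoe.trans hae))
      refine ⟨h, ?_⟩
      show h + L h = y₀
      apply Lp.ext
      filter_upwards [Lp.coeFn_add h (L h), hL h, hcoe,
        ae_restrict_mem measurableSet_Ioo] with t e1 e2 e3 ht
      have htIcc : t ∈ Icc (0:ℝ) 1 := Ioo_subset_Icc_self ht
      have e2' : (⇑(L h)) t = -(a t) * xiF (⇑h) t - b t * etaF (⇑h) t := e2
      have hx : xiF (⇑h) t = ξ t := by
        rw [hG9.1 t]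
        exact ((hrep t htIcc).1).symm
      have he : etaF (⇑h) t = ξ' t := by
        rw [hG9.2 t]
        exact ((hrep t htIcc).2).symm
      have e1' : (⇑(h + L h)) t = ⇑h t + ⇑(L h) t := e1
      rw [e1', e3, e2', hx, he]
      ring
end
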